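/- arXiv:2510.25313 — 2 statements merged into one kernel-verified Lean document; each statement's English description precedes it below -/
import Mathlib

section
/- For every unit vector ψ ∈ ℂ^d with associated pure-state density matrix |ψ⟩⟨ψ|, one has M_Re(|ψ⟩⟨ψ|) = 1 − (1/√2)·√(1 + |⟨ψ, ψ*⟩|²), where ψ* denotes the entrywise complex conjugate of ψ and ⟨·,·⟩ is the standard Hermitian inner product on ℂ^d. -/
open Matrix Complex ComplexOrder Classical

/-- The positive semidefinite square root of a matrix (junk value `0` if not PSD). -/
noncomputable def psqrt {n : Type*} [Fintype n] [DecidableEq n] (A : Matrix n n ℂ) :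
    Matrix n n ℂ :=
  if h : A.PosSemidef then
    (h.1.eigenvectorUnitary : Matrix n n ℂ) * diagonal (((↑) : ℝ → ℂ) ∘ (√·) ∘ h.1.eigenvalues) *
      (star h.1.eigenvectorUnitary : Matrix n n ℂ) else 0

/-- Entrywise complex conjugate of a matrix. -/
def mconj {m n : Type*} (A : Matrix m n ℂ) : Matrix m n ℂ := A.map (starRingEnd ℂ)

/-- Fidelity `F(ρ,σ) = Tr √(√ρ σ √ρ)`. -/
noncomputable def fidelity {n : Type*} [Fintype n] [DecidableEq n] (ρ σ : Matrix n n ℂ) : ℝ :=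
  ((psqrt (psqrt ρ * σ * psqrt ρ)).trace).re

/-- The real part state `Re(ρ) = (ρ + ρ*)/2`. -/
noncomputable def reState {n : Type*} (ρ : Matrix n n ℂ) : Matrix n n ℂ :=
  ((1 : ℂ)/2) • (ρ + mconj ρ)

/-- The imaginarity measure `M_Re(ρ) = 1 - F(ρ, Re(ρ))`. -/
noncomputable def MRe {n : Type*} [Fintype n] [DecidableEq n] (ρ : Matrix n n ℂ) : ℝ :=
  1 - fidelity ρ (reState ρ)

/-- A density matrix: positive semidefinite with trace 1. -/
def IsDensityMatrix {n : Type*} [Fintype n] (ρ : Matrix n n ℂ) : Prop :=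
  ρ.PosSemidef ∧ ρ.trace = 1

lemma psqrt_eq {n : Type*} [Fintype n] [DecidableEq n] {A S : Matrix n n ℂ}
    (hS : S.PosSemidef) (h : S ^ 2 = A) : psqrt A = S := by
  have hA : A.PosSemidef := h ▸ hS.pow 2
  rw [psqrt, dif_pos hA]
  open scoped MatrixOrder in
  calc _ = cfc Real.sqrt A := by rw [hA.1.cfc_eq]; rfl
    _ = CFC.sqrt A := by rw [CFC.sqrt_eq_real_sqrt A hA.nonneg, cfcₙ_eq_cfc (hf0 := by simp)]
    _ = S := CFC.sqrt_unique (by rw [← sq]; exact h) hS.nonneg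

lemma vmv_mul {n : Type*} [Fintype n] (u v w x : n → ℂ) :
    vecMulVec u v * vecMulVec w x = (v ⬝ᵥ w) • vecMulVec u x := by
  ext i j
  simp only [mul_apply, vecMulVec_apply, Matrix.smul_apply, dotProduct, Finset.sum_mul, smul_eq_mul,
    Finset.mul_sum]
  exact Finset.sum_congr rfl fun k _ => by ring

lemma vmv_psd {n : Type*} [Fintype n] [DecidableEq n] (ψ : n → ℂ) :
    (vecMulVec ψ (star ψ)).PosSemidef := by
  rw [vecMulVec_eq (Fin 1), ← conjTranspose_replicateCol]
  exact posSemidef_self_mul_conjTranspose _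

theorem stmt2 (d : ℕ) (ψ : Fin d → ℂ) (hψ : star ψ ⬝ᵥ ψ = 1) :
    MRe (Matrix.vecMulVec ψ (star ψ)) =
      1 - (1 / Real.sqrt 2) * Real.sqrt (1 + ‖star ψ ⬝ᵥ star ψ‖ ^ 2) := by
  set ρ := Matrix.vecMulVec ψ (star ψ) with hρ
  have hψψ : ψ ⬝ᵥ star ψ = 1 := by
    rw [← hψ]; simp [dotProduct, mul_comm]
  have hρsq : ρ ^ 2 = ρ := by
    rw [sq, hρ, vmv_mul, hψ, one_smul]
  have hpsd : ρ.PosSemidef := vmv_psd ψ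
  have hsρ : psqrt ρ = ρ := psqrt_eq hpsd hρsq
  -- the conjugate matrix
  have hmc : mconj ρ = vecMulVec (star ψ) ψ := by
    ext i j
    simp [mconj, hρ, vecMulVec_apply, mul_comm]
  set a := star ψ ⬝ᵥ star ψ with ha
  have hconj : ψ ⬝ᵥ ψ = star a := by
    simp [ha, dotProduct, star_sum]
  set c : ℝ := (1 + ‖a‖ ^ 2) / 2 with hc
  have hcnn : 0 ≤ c := by positivity
  have key : ρ * reState ρ * ρ = (c : ℂ) • ρ := by
    rw [reState, hmc]
    rw [Matrix.mul_smul, Matrix.smul_mul]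
    rw [Matrix.mul_add, Matrix.add_mul]
    have h1 : ρ * ρ * ρ = ρ := by
      rw [← sq, hρsq, ← sq, hρsq]
    have h2 : ρ * vecMulVec (star ψ) ψ * ρ = ((‖a‖ : ℂ) ^ 2) • ρ := by
      rw [hρ, vmv_mul, Matrix.smul_mul, vmv_mul, hconj, smul_smul, ← ha]
      congr 1
      rw [show (star a) = (starRingEnd ℂ) a from rfl, Complex.mul_conj, ← Complex.ofReal_pow,
        Complex.sq_norm]
    rw [h1, h2, smul_add, smul_smul, ← add_smul]
    congr 1
    push_cast [hc]
    ring
  have hS : ((Real.sqrt c : ℂ) • ρ).PosSemidef := by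
    refine ⟨?_, fun x => ?_⟩
    · unfold Matrix.IsHermitian
      rw [conjTranspose_smul, hpsd.1.eq]
      norm_num
    · exact (hpsd.smul (Complex.zero_le_real.mpr (Real.sqrt_nonneg c))).2 x
  have hSsq : ((Real.sqrt c : ℂ) • ρ) ^ 2 = (c : ℂ) • ρ := by
    rw [smul_pow, hρsq, ← Complex.ofReal_pow, Real.sq_sqrt hcnn]
  have htr : ρ.trace = 1 := by
    rw [hρ, trace]
    simpa [Matrix.diag, vecMulVec_apply, dotProduct] using hψψ
  have hfin : fidelity ρ (reState ρ) = Real.sqrt c := by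
    rw [fidelity, hsρ, key, psqrt_eq hS hSsq, trace_smul, htr, smul_eq_mul, mul_one]
    simp
  rw [MRe, hfin, hc]
  rw [Real.sqrt_div (by positivity) 2]
  ring
end

section
/- Let ρ be a qubit density matrix with Bloch vector r = (r_x, r_y, r_z) ∈ ℝ³, |r|² = r_x² + r_y² + r_z² ≤ 1. Then the geometric imaginarity of ρ equals M_g(ρ) = (1/2)(1 − √(1 − r_y²)); equivalently, F(ρ, ρ*) = √(1 − r_y²). -/
open Matrix Complex ComplexOrder Classical

/-- The geometric imaginarity `M_g(ρ) = (1/2)(1 - F(ρ, ρ*))`. -/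
noncomputable def Mg {n : Type*} [Fintype n] [DecidableEq n] (ρ : Matrix n n ℂ) : ℝ :=
  (1/2) * (1 - fidelity ρ (mconj ρ))

lemma cayley2 (A : Matrix (Fin 2) (Fin 2) ℂ) : A * A = A.trace • A - A.det • 1 := by
  ext i j
  fin_cases i <;> fin_cases j <;>
    simp [Matrix.mul_apply, Fin.sum_univ_two, Matrix.trace_fin_two, Matrix.det_fin_two,
      Matrix.one_apply] <;> ring

lemma psd_smul_real {A : Matrix (Fin 2) (Fin 2) ℂ} (hA : A.PosSemidef) (c : ℝ) (hc : 0 ≤ c) :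
    (((c:ℂ)) • A).PosSemidef := by
  refine Matrix.PosSemidef.of_dotProduct_mulVec_nonneg ?_ ?_
  · simp [Matrix.IsHermitian, Matrix.conjTranspose_smul, hA.1.eq, Complex.star_def,
      Complex.conj_ofReal]
  · intro x
    rw [Matrix.smul_mulVec, dotProduct_smul]
    exact smul_nonneg (by exact_mod_cast Complex.zero_le_real.mpr hc) (hA.dotProduct_mulVec_nonneg x)

open scoped MatrixOrder in
lemma psqrt_sqrt {A : Matrix (Fin 2) (Fin 2) ℂ} (hA : A.PosSemidef) : psqrt A = CFC.sqrt A := by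
  rw [CFC.sqrt_eq_cfc, cfc_nnreal_eq_real _ A, hA.1.cfc_eq, psqrt, dif_pos hA]
  simp only [IsHermitian.cfc, Unitary.conjStarAlgAut_apply]
  congr 3
  funext i
  simp [Real.coe_sqrt, Real.coe_toNNReal', hA.eigenvalues_nonneg i]

open scoped MatrixOrder in
lemma psqrt_eq_s11 {A B : Matrix (Fin 2) (Fin 2) ℂ} (hA : A.PosSemidef) (hB : B.PosSemidef)
    (h : B * B = A) : psqrt A = B := by
  rw [psqrt_sqrt hA]
  exact (CFC.sqrt_eq_iff _ _ hA.nonneg hB.nonneg).2 h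

lemma psqrt_formula {A : Matrix (Fin 2) (Fin 2) ℂ} (hA : A.PosSemidef) (e m : ℝ)
    (he : 0 ≤ e) (hm : 0 < m)
    (hdet : A.det = ((e:ℂ))^2) (htr : A.trace = ((m^2 - 2*e : ℝ) : ℂ)) :
    psqrt A = (((1/m : ℝ)) : ℂ) • (A + (e:ℂ) • 1) ∧ (psqrt A).trace = (m : ℂ) := by
  have h1 : ((e:ℂ) • (1 : Matrix (Fin 2) (Fin 2) ℂ)).PosSemidef := by
    simpa using psd_smul_real Matrix.PosSemidef.one e he
  have hBpsd : ((((1/m : ℝ)) : ℂ) • (A + (e:ℂ) • 1)).PosSemidef :=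
    psd_smul_real (hA.add h1) _ (by positivity)
  have hmC : (m : ℂ) ≠ 0 := by exact_mod_cast hm.ne'
  have hsq : ((((1/m : ℝ)) : ℂ) • (A + (e:ℂ) • 1)) * ((((1/m : ℝ)) : ℂ) • (A + (e:ℂ) • 1)) = A := by
    rw [Matrix.smul_mul, Matrix.mul_smul, smul_smul]
    simp only [mul_add, add_mul, Matrix.smul_mul, Matrix.mul_smul, Matrix.mul_one,
      Matrix.one_mul, smul_smul, cayley2 A, htr, hdet]
    push_cast
    match_scalars <;> field_simp <;> ring
  have hps : psqrt A = (((1/m : ℝ)) : ℂ) • (A + (e:ℂ) • 1) := psqrt_eq_s11 hA hBpsd hsq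
  refine ⟨hps, ?_⟩
  rw [hps, Matrix.trace_smul, Matrix.trace_add, Matrix.trace_smul, htr]
  simp [Matrix.trace_one]
  push_cast
  field_simp
  ring

noncomputable def rhoM (rx ry rz : ℝ) : Matrix (Fin 2) (Fin 2) ℂ :=
  ((1:ℂ)/2) • !![1 + (rz:ℂ), (rx:ℂ) - Complex.I * (ry:ℂ); (rx:ℂ) + Complex.I * (ry:ℂ), 1 - (rz:ℂ)]

lemma rho_herm (rx ry rz : ℝ) : (rhoM rx ry rz).IsHermitian := by
  ext i j
  fin_cases i <;> fin_cases j <;>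
    simp [rhoM, Matrix.IsHermitian, Matrix.conjTranspose_apply, Complex.ext_iff]

lemma rho_psd (rx ry rz : ℝ) (hr : rx ^ 2 + ry ^ 2 + rz ^ 2 ≤ 1) :
    (rhoM rx ry rz).PosSemidef := by
  refine Matrix.PosSemidef.of_dotProduct_mulVec_nonneg (rho_herm rx ry rz) (fun x => ?_)
  rw [Complex.le_def]
  constructor
  · simp [rhoM, dotProduct, Matrix.mulVec, Fin.sum_univ_two, Complex.add_re,
      Complex.mul_re, Complex.mul_im]
    have hc : (0:ℝ) ≤ 1 - (rx^2+ry^2+rz^2) := by linarith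
    nlinarith [sq_nonneg ((1+rz)*(x 0).re + rx*(x 1).re + ry*(x 1).im),
      sq_nonneg ((1+rz)*(x 0).im + rx*(x 1).im - ry*(x 1).re),
      sq_nonneg ((1-rz)*(x 1).re + rx*(x 0).re - ry*(x 0).im),
      sq_nonneg ((1-rz)*(x 1).im + rx*(x 0).im + ry*(x 0).re),
      mul_nonneg hc (add_nonneg (sq_nonneg ((x 1).re)) (sq_nonneg ((x 1).im))),
      mul_nonneg hc (add_nonneg (sq_nonneg ((x 0).re)) (sq_nonneg ((x 0).im)))]
  · simp [rhoM, dotProduct, Matrix.mulVec, Fin.sum_univ_two, Complex.ext_iff,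
      Complex.mul_re, Complex.mul_im]
    ring

lemma mconj_rho (rx ry rz : ℝ) : mconj (rhoM rx ry rz) = rhoM rx (-ry) rz := by
  ext i j
  fin_cases i <;> fin_cases j <;>
    simp [mconj, rhoM, Complex.ext_iff]

lemma rho_deg (ry : ℝ) (hy : ry^2 = 1) :
    rhoM 0 ry 0 * mconj (rhoM 0 ry 0) * rhoM 0 ry 0 = 0 := by
  rw [mconj_rho]
  have hy' : ((ry:ℂ))^2 = 1 := by exact_mod_cast congrArg (Complex.ofReal) hy
  ext i j
  fin_cases i <;> fin_cases j <;>
      simp [rhoM, Matrix.mul_apply, Fin.sum_univ_two]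
  · linear_combination ((ry:ℂ)^2/8) * Complex.I_sq - (1/8) * hy'
  · linear_combination (-(I*(ry:ℂ)^3)/8) * Complex.I_sq + ((I*(ry:ℂ))/8) * hy'
  · linear_combination ((I*(ry:ℂ)^3)/8) * Complex.I_sq - ((I*(ry:ℂ))/8) * hy'
  · linear_combination ((ry:ℂ)^2/8) * Complex.I_sq - (1/8) * hy'

theorem stmt11' (rx ry rz : ℝ) (hr : rx ^ 2 + ry ^ 2 + rz ^ 2 ≤ 1) :
    fidelity (rhoM rx ry rz) (mconj (rhoM rx ry rz)) = Real.sqrt (1 - ry ^ 2) := by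
  set ρ := rhoM rx ry rz with hρdef
  set ρc := mconj ρ with hρcdef
  have hρpsd := rho_psd rx ry rz hr
  set d : ℝ := (1 - (rx^2+ry^2+rz^2))/4 with hd_def
  have hd : 0 ≤ d := by simp only [hd_def]; linarith
  set e : ℝ := Real.sqrt d with he_def
  have he : 0 ≤ e := Real.sqrt_nonneg d
  have he2 : e^2 = d := Real.sq_sqrt hd
  set k : ℝ := Real.sqrt (1 + 2*e) with hk_def
  have hk : 0 < k := Real.sqrt_pos.mpr (by linarith)
  have hk2 : k^2 = 1 + 2*e := Real.sq_sqrt (by linarith)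
  have hdetρ : ρ.det = ((e:ℂ))^2 := by
    have : ρ.det = ((d:ℝ):ℂ) := by
      simp [hρdef, rhoM, Matrix.det_fin_two]
      rw [hd_def]
      push_cast
      linear_combination ((ry:ℂ)^2/4) * Complex.I_sq
    rw [this, ← he2]; push_cast; ring
  have htrρ : ρ.trace = ((k^2 - 2*e : ℝ):ℂ) := by
    rw [hk2]
    have : ρ.trace = 1 := by
      simp [hρdef, rhoM, Matrix.trace_fin_two]; ring
    rw [this]; push_cast; ring
  obtain ⟨hpsρ, -⟩ := psqrt_formula hρpsd e k he hk hdetρ htrρ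
  set S : Matrix (Fin 2) (Fin 2) ℂ := (((1/k : ℝ)) : ℂ) • (ρ + (e:ℂ) • 1) with hS_def
  have hSpsd : S.PosSemidef := by
    open scoped MatrixOrder in (rw [← hpsρ, psqrt_sqrt hρpsd]; exact (CFC.sqrt_nonneg _).posSemidef)
  have hS2 : S * S = ρ := by
    open scoped MatrixOrder in (rw [← hpsρ, psqrt_sqrt hρpsd]; exact CFC.sqrt_mul_sqrt_self _ hρpsd.nonneg)
  have hρc_eq : ρc = ρᵀ := by
    ext i j
    fin_cases i <;> fin_cases j <;>
      simp [hρcdef, hρdef, mconj, rhoM, Matrix.transpose_apply, Complex.ext_iff]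
  have hρcpsd : ρc.PosSemidef := hρc_eq ▸ hρpsd.transpose
  have hdetρc : ρc.det = ((e:ℂ))^2 := by
    rw [hρc_eq, Matrix.det_transpose, hdetρ]
  set M : Matrix (Fin 2) (Fin 2) ℂ := S * ρc * S with hM_def
  have hMpsd : M.PosSemidef := by
    have := hρcpsd.mul_mul_conjTranspose_same S
    rwa [hSpsd.1.eq] at this
  have hdetM : M.det = ((d:ℂ))^2 := by
    rw [hM_def, Matrix.det_mul, Matrix.det_mul, hdetρc]
    have : S.det * S.det = ρ.det := by rw [← Matrix.det_mul, hS2]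
    calc S.det * (e:ℂ)^2 * S.det = S.det * S.det * (e:ℂ)^2 := by ring
      _ = ρ.det * (e:ℂ)^2 := by rw [this]
      _ = ((d:ℂ))^2 := by rw [hdetρ]; norm_cast; rw [he2]; ring
  have htrM : M.trace = ((1 - ry^2 - 2*d : ℝ):ℂ) := by
    have h1 : M.trace = (ρ * ρc).trace := by
      rw [hM_def, Matrix.trace_mul_comm, ← Matrix.mul_assoc, hS2]
    rw [h1, hρcdef, hρdef, mconj_rho]
    simp [rhoM, Matrix.trace_fin_two, Matrix.mul_apply, Fin.sum_univ_two, hd_def]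
    push_cast
    linear_combination ((ry:ℂ)^2/2) * Complex.I_sq
  have hfid : fidelity ρ ρc = ((psqrt M).trace).re := by
    rw [fidelity, hpsρ]
  rcases eq_or_lt_of_le (by nlinarith : ry^2 ≤ 1) with hy1 | hy1
  · have hrx : rx = 0 := by nlinarith
    have hrz : rz = 0 := by nlinarith
    have hd0 : d = 0 := by rw [hd_def, hrx, hrz, ← hy1]; ring
    have he0 : e = 0 := by rw [he_def, hd0, Real.sqrt_zero]
    have hk1 : k = 1 := by rw [hk_def, he0]; norm_num
    have hS_eq : S = ρ := by rw [hS_def, he0, hk1]; push_cast; simp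
    have hM0 : M = 0 := by
      rw [hM_def, hS_eq, hρcdef, hρdef, hrx, hrz]
      exact rho_deg ry hy1
    rw [hfid, hM0, psqrt_eq_s11 Matrix.PosSemidef.zero Matrix.PosSemidef.zero (by simp)]
    simp [hy1]
  · set m : ℝ := Real.sqrt (1 - ry^2) with hm_def
    have hm : 0 < m := Real.sqrt_pos.mpr (by linarith)
    have hm2 : m^2 = 1 - ry^2 := Real.sq_sqrt (by linarith)
    obtain ⟨-, htrT⟩ := psqrt_formula hMpsd d m hd hm
      (by rw [hdetM]) (by rw [htrM, hm2])
    rw [hfid, htrT, Complex.ofReal_re]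

theorem stmt11 (rx ry rz : ℝ) (hr : rx ^ 2 + ry ^ 2 + rz ^ 2 ≤ 1) :
    Mg (((1:ℂ)/2) • !![1 + (rz:ℂ), (rx:ℂ) - Complex.I * (ry:ℂ); (rx:ℂ) + Complex.I * (ry:ℂ), 1 - (rz:ℂ)] : Matrix (Fin 2) (Fin 2) ℂ) = (1/2) * (1 - Real.sqrt (1 - ry ^ 2)) ∧
    fidelity (((1:ℂ)/2) • !![1 + (rz:ℂ), (rx:ℂ) - Complex.I * (ry:ℂ); (rx:ℂ) + Complex.I * (ry:ℂ), 1 - (rz:ℂ)] : Matrix (Fin 2) (Fin 2) ℂ) (mconj (((1:ℂ)/2) • !![1 + (rz:ℂ), (rx:ℂ) - Complex.I * (ry:ℂ); (rx:ℂ) + Complex.I * (ry:ℂ), 1 - (rz:ℂ)] : Matrix (Fin 2) (Fin 2) ℂ)) =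
      Real.sqrt (1 - ry ^ 2) := by
  have h := stmt11' rx ry rz hr
  constructor
  · show Mg (rhoM rx ry rz) = (1/2) * (1 - Real.sqrt (1 - ry ^ 2))
    unfold Mg
    rw [h]
  · exact h
end
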